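/- Let e, d, η_{I,h}, η_k, η_{R_I}, η_{I_u}, η_{I_z} ∈ ℝ satisfy the error representation e = d + η_{I,h} + η_k + η_{R_I} + η_{I_u} + η_{I_z}, and suppose there exists bᴵ ∈ (0,1) with |d| ≤ bᴵ·|e| (saturation assumption for interpolations). Then (1/(1+bᴵ))·(|η_{I,h}| − |η_k + η_{R_I} + η_{I_u} + η_{I_z}|) ≤ |e| ≤ (1/(1−bᴵ))·(|η_{I,h}| + |η_k + η_{R_I} + η_{I_u} + η_{I_z}|). If, in addition, there exists α ∈ (0,1) with |η_k + η_{R_I} + η_{I_u} + η_{I_z}| ≤ α·|η_{I,h}|, then the discretization error estimator η_{I,h} is efficient and reliable: ((1−α)/(1+bᴵ))·|η_{I,h}| ≤ |e| ≤ ((1+α)/(1−bᴵ))·|η_{I,h}|. -/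

import Mathlib

/-- Efficiency and reliability for the interpolation discretization error
estimator `η_{I,h}`: with `e = d + η_{I,h} + η_k + η_{R_I} + η_{I_u} + η_{I_z}`
and saturation `|d| ≤ bᴵ⋅|e|`, `bᴵ ∈ (0,1)`, one has the two-sided estimate,
and if moreover `|η_k + η_{R_I} + η_{I_u} + η_{I_z}| ≤ α⋅|η_{I,h}|` with
`α ∈ (0,1)`, then `((1−α)/(1+bᴵ))⋅|η_{I,h}| ≤ |e| ≤ ((1+α)/(1−bᴵ))⋅|η_{I,h}|`. -/
theorem interpolation_discretization_estimator_efficient_reliable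
    (e d ηIh ηk ηRI ηIu ηIz bI : ℝ)
    (hrep : e = d + ηIh + ηk + ηRI + ηIu + ηIz)
    (hb : bI ∈ Set.Ioo (0:ℝ) 1) (hsat : |d| ≤ bI * |e|) :
    ((1 / (1 + bI)) * (|ηIh| - |ηk + ηRI + ηIu + ηIz|) ≤ |e| ∧
      |e| ≤ (1 / (1 - bI)) * (|ηIh| + |ηk + ηRI + ηIu + ηIz|)) ∧
    (∀ α ∈ Set.Ioo (0:ℝ) 1, |ηk + ηRI + ηIu + ηIz| ≤ α * |ηIh| →
      ((1 - α) / (1 + bI)) * |ηIh| ≤ |e| ∧ |e| ≤ ((1 + α) / (1 - bI)) * |ηIh|) := by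
  obtain ⟨hb0, hb1⟩ := hb
  have h1p : (0:ℝ) < 1 + bI := by linarith
  have h1m : (0:ℝ) < 1 - bI := by linarith
  set S := ηk + ηRI + ηIu + ηIz with hS
  have hed : e - d = ηIh + S := by rw [hrep]; ring
  have hlow : |ηIh| - |S| ≤ (1 + bI) * |e| := by
    have h1 : |ηIh| - |S| ≤ |ηIh + S| := by
      have := abs_sub_abs_le_abs_sub ηIh (-S)
      simpa [sub_neg_eq_add] using this
    have h2 : |ηIh + S| ≤ |e| + |d| := by rw [← hed]; exact abs_sub e d
    linarith
  have hup : (1 - bI) * |e| ≤ |ηIh| + |S| := by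
    have h1 : |e| ≤ |d| + |ηIh + S| := by
      calc |e| = |d + (ηIh + S)| := by rw [hrep, hS]; ring_nf
        _ ≤ |d| + |ηIh + S| := abs_add_le _ _
    have h2 : |ηIh + S| ≤ |ηIh| + |S| := abs_add_le _ _
    nlinarith
  have main₁ : (1 / (1 + bI)) * (|ηIh| - |S|) ≤ |e| := by
    rw [div_mul_eq_mul_div, one_mul, div_le_iff₀ h1p]
    linarith
  have main₂ : |e| ≤ (1 / (1 - bI)) * (|ηIh| + |S|) := by
    rw [div_mul_eq_mul_div, one_mul, le_div_iff₀ h1m]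
    linarith
  refine ⟨⟨main₁, main₂⟩, ?_⟩
  intro α ⟨hα0, hα1⟩ hSα
  constructor
  · calc ((1 - α) / (1 + bI)) * |ηIh| = (1 / (1 + bI)) * ((1 - α) * |ηIh|) := by ring
      _ ≤ (1 / (1 + bI)) * (|ηIh| - |S|) := by
          apply mul_le_mul_of_nonneg_left (by linarith) (by positivity)
      _ ≤ |e| := main₁
  · calc |e| ≤ (1 / (1 - bI)) * (|ηIh| + |S|) := main₂
      _ ≤ (1 / (1 - bI)) * ((1 + α) * |ηIh|) := by
          apply mul_le_mul_of_nonneg_left (by linarith) (by positivity)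
      _ = ((1 + α) / (1 - bI)) * |ηIh| := by ring
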